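/- Let (S,+) be a commutative semigroup and let A ⊆ S be a J-set. Then for every m ∈ ℕ and every finite nonempty set F of sequences f : ℕ → S, there exist a ∈ S and a finite nonempty H ⊆ ℕ with min H > m such that a + Σ_{t∈H} f(t) ∈ A for all f ∈ F. -/

import Mathlib

/-- `A` is thick: every finite nonempty set can be right-translated into `A`. -/
def Thick {S : Type*} [Semigroup S] (A : Set S) : Prop :=
  ∀ E : Finset S, E.Nonempty → ∃ x : S, ∀ e ∈ E, e * x ∈ A

def Syndetic {S : Type*} [Semigroup S] (A : Set S) : Prop :=
  ∃ F : Finset S, F.Nonempty ∧ ∀ s : S, ∃ t ∈ F, t * s ∈ A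

def PiecewiseSyndetic {S : Type*} [Semigroup S] (A : Set S) : Prop :=
  ∃ F : Finset S, F.Nonempty ∧ Thick {s : S | ∃ t ∈ F, t * s ∈ A}

def ThickAdd {S : Type*} [AddSemigroup S] (A : Set S) : Prop :=
  ∀ E : Finset S, E.Nonempty → ∃ x : S, ∀ e ∈ E, e + x ∈ A

def SyndeticAdd {S : Type*} [AddSemigroup S] (A : Set S) : Prop :=
  ∃ F : Finset S, F.Nonempty ∧ ∀ s : S, ∃ t ∈ F, t + s ∈ A

def PiecewiseSyndeticAdd {S : Type*} [AddSemigroup S] (A : Set S) : Prop :=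
  ∃ F : Finset S, F.Nonempty ∧ ThickAdd {s : S | ∃ t ∈ F, t + s ∈ A}

/-- Sum of `f t` over a nonempty finite `H ⊆ ℕ` in a commutative semigroup
(junk value `f 0` when `H = ∅`). -/
def fSum {S : Type*} [AddCommSemigroup S] (H : Finset ℕ) (f : ℕ → S) : S :=
  match Finset.sort H (· ≤ ·) with
  | [] => f 0
  | a :: l => l.foldl (fun s t => s + f t) (f a)

/-- `J`-set in a commutative semigroup. -/
def JSetAdd {S : Type*} [AddCommSemigroup S] (A : Set S) : Prop :=
  ∀ F : Finset (ℕ → S), F.Nonempty →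
    ∃ (a : S) (H : Finset ℕ), H.Nonempty ∧ ∀ f ∈ F, a + fSum H f ∈ A

/-- `x(m,a,t,f) = a(0)·f(t 0)·a(1)·f(t 1)⋯f(t (m-1))·a(m)` (0-indexed version of
`(∏_{j=1}^m a(j)·f(t(j)))·a(m+1)`). -/
def xNC {S : Type*} [Semigroup S] (m : ℕ) (a : ℕ → S) (t : ℕ → ℕ) (f : ℕ → S) : S :=
  (List.range m).foldl (fun s j => s * f (t j) * a (j + 1)) (a 0)

/-- `J`-set in a not-necessarily-commutative semigroup. -/
def JSetNC {S : Type*} [Semigroup S] (A : Set S) : Prop :=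
  ∀ G : Finset (ℕ → S), G.Nonempty →
    ∃ (m : ℕ) (a : ℕ → S) (t : ℕ → ℕ), 1 ≤ m ∧
      (∀ i j : ℕ, i < j → j < m → t i < t j) ∧
      ∀ f ∈ G, xNC m a t f ∈ A

/-- `v 0 + v 1 + ⋯ + v r` in an additive semigroup. -/
def seqSum {S : Type*} [AddSemigroup S] (v : ℕ → S) (r : ℕ) : S :=
  (List.range r).foldl (fun s j => s + v (j + 1)) (v 0)

/-- `v 0 * v 1 * ⋯ * v r` in a semigroup. -/
def seqProd {S : Type*} [Semigroup S] (v : ℕ → S) (r : ℕ) : S :=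
  (List.range r).foldl (fun s j => s * v (j + 1)) (v 0)

/-- Collectionwise piecewise syndetic family (multiplicative). -/
def CollectionwisePS {S : Type*} [Semigroup S] (𝒜 : Set (Set S)) : Prop :=
  ∃ (G : Finset (Set S) → Finset S) (x : Finset (Set S) → Finset S → S),
    ∀ (F : Finset S) (ℱ ℋ : Finset (Set S)), ℱ.Nonempty → ↑ℋ ⊆ 𝒜 → ℱ ⊆ ℋ →
      ∀ y ∈ F, ∃ t ∈ G ℱ, t * (y * x ℋ F) ∈ ⋂₀ (ℱ : Set (Set S))

/-- Collectionwise piecewise syndetic family (additive). -/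
def CollectionwisePSAdd {S : Type*} [AddSemigroup S] (𝒜 : Set (Set S)) : Prop :=
  ∃ (G : Finset (Set S) → Finset S) (x : Finset (Set S) → Finset S → S),
    ∀ (F : Finset S) (ℱ ℋ : Finset (Set S)), ℱ.Nonempty → ↑ℋ ⊆ 𝒜 → ℱ ⊆ ℋ →
      ∀ y ∈ F, ∃ t ∈ G ℱ, t + (y + x ℋ F) ∈ ⋂₀ (ℱ : Set (Set S))

/-- Central set (multiplicative), via the combinatorial characterization. -/
def Central {S : Type*} [Semigroup S] (A : Set S) : Prop :=
  ∃ (I : Type) (C : I → Set S), Nonempty I ∧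
    (∀ N, C N ⊆ A) ∧
    (∀ N M : I, ∃ P : I, C P ⊆ C N ∧ C P ⊆ C M) ∧
    (∀ N : I, ∀ y ∈ C N, ∃ M : I, C M ⊆ {s : S | y * s ∈ C N}) ∧
    CollectionwisePS {B : Set S | ∃ N : I, B = C N}

/-- Central set (additive), via the combinatorial characterization. -/
def CentralAdd {S : Type*} [AddSemigroup S] (A : Set S) : Prop :=
  ∃ (I : Type) (C : I → Set S), Nonempty I ∧
    (∀ N, C N ⊆ A) ∧
    (∀ N M : I, ∃ P : I, C P ⊆ C N ∧ C P ⊆ C M) ∧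
    (∀ N : I, ∀ y ∈ C N, ∃ M : I, C M ⊆ {s : S | y + s ∈ C N}) ∧
    CollectionwisePSAdd {B : Set S | ∃ N : I, B = C N}

lemma sort_map_shift (H : Finset ℕ) (c : ℕ) :
    Finset.sort (H.map ⟨fun t => t + c, add_left_injective c⟩) (· ≤ ·)
      = (Finset.sort H (· ≤ ·)).map (fun t => t + c) := by
  refine (fun hp h1 h2 => List.Perm.eq_of_pairwise' (r := (· ≤ ·)) h1 h2 hp) ?_ ?_ ?_
  · rw [← Multiset.coe_eq_coe]
    push_cast [Finset.sort_eq, Finset.map_val]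
    rw [← Multiset.map_coe, Finset.sort_eq]
    rfl
  · exact Finset.pairwise_sort _ _
  · exact List.Pairwise.map _ (fun a b h => by omega) (Finset.pairwise_sort H _)

lemma fSum_map_shift {S : Type*} [AddCommSemigroup S] (H : Finset ℕ) (hHne : H.Nonempty) (c : ℕ) (f : ℕ → S) :
    fSum (H.map ⟨fun t => t + c, add_left_injective c⟩) f = fSum H (fun t => f (t + c)) := by
  unfold fSum
  rw [sort_map_shift]
  cases hs : Finset.sort H (· ≤ ·) with
  | nil =>
    exfalso
    have : H = ∅ := Finset.eq_empty_of_forall_notMem fun x hx => by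
      have := (Finset.mem_sort (α := ℕ) (· ≤ ·)).mpr hx
      simp [hs] at this
    simp [this] at hHne
  | cons a l => simp [List.foldl_map]

/-- for a `J`-set in a commutative semigroup, the witnessing set `H`
can be chosen with `min H > m`. -/
theorem jSetAdd_min_gt {S : Type*} [AddCommSemigroup S] (A : Set S)
    (hA : JSetAdd A) (m : ℕ) (F : Finset (ℕ → S)) (hF : F.Nonempty) :
    ∃ (a : S) (H : Finset ℕ), H.Nonempty ∧ (∀ t ∈ H, m < t) ∧
      ∀ f ∈ F, a + fSum H f ∈ A := by
  classical
  obtain ⟨a, H, hHne, hmem⟩ := hA (F.image (fun f t => f (t + (m + 1))))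
    (hF.image _)
  refine ⟨a, H.map ⟨fun t => t + (m + 1), add_left_injective _⟩,
    Finset.Nonempty.map hHne, ?_, ?_⟩
  · intro t ht
    simp only [Finset.mem_map, Function.Embedding.coeFn_mk] at ht
    obtain ⟨u, -, rfl⟩ := ht; omega
  · intro f hf
    rw [fSum_map_shift _ hHne]
    exact hmem _ (Finset.mem_image_of_mem _ hf)
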